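/- Let ν > 0, T > 0, and let F, G : [0,T] × ℝ³ → [0,∞) be measurable. Define H(t,ξ) = ∫₀ᵗ e^{−ν(t−s)|ξ|²} |ξ| (F(s,·) ∗ G(s,·))(ξ) ds, where ∗ denotes convolution in ξ on ℝ³. Then ∫₀ᵀ ∫_{ℝ³} |ξ| H(t,ξ) dξ dt ≤ ν^{−1} ( ∫₀ᵀ ( ∫_{ℝ³} F(s,ξ) dξ )² ds )^{1/2} ( ∫₀ᵀ ( ∫_{ℝ³} G(s,ξ) dξ )² ds )^{1/2}. -/

import Mathlib

open MeasureTheory Set Real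

noncomputable abbrev E3 : Type := EuclideanSpace ℝ (Fin 3)

lemma aux_conv (f g : E3 → ENNReal) (hf : Measurable f) (hg : Measurable g) :
    ∫⁻ ξ, ∫⁻ η, f η * g (ξ - η) = (∫⁻ η, f η) * (∫⁻ ξ, g ξ) := by
  rw [lintegral_lintegral_swap
    (((hf.comp measurable_snd).mul (hg.comp (measurable_fst.sub measurable_snd))).aemeasurable)]
  calc ∫⁻ η, ∫⁻ ξ, f η * g (ξ - η)
      = ∫⁻ η, f η * ∫⁻ ξ, g (ξ - η) :=
        lintegral_congr fun η =>
          lintegral_const_mul _ (hg.comp (measurable_id.sub measurable_const))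
    _ = ∫⁻ η, f η * ∫⁻ ξ, g ξ := by simp_rw [lintegral_sub_right_eq_self g]
    _ = _ := lintegral_mul_const _ hf

noncomputable def phi (ν : ℝ) (K : ℝ → E3 → ENNReal) (t s : ℝ) (ξ : E3) : ENNReal :=
  (if 0 ≤ s ∧ s ≤ t then ENNReal.ofReal (Real.exp (-ν * (t - s) * ‖ξ‖ ^ 2)) else 0) *
    ENNReal.ofReal (‖ξ‖ ^ 2) * K s ξ

lemma phi_meas (ν : ℝ) (K : ℝ → E3 → ENNReal) (hK : Measurable (Function.uncurry K)) :
    Measurable fun p : (ℝ × ℝ) × E3 => phi ν K p.1.1 p.1.2 p.2 := by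
  apply Measurable.mul
  apply Measurable.mul
  · apply Measurable.ite
    · exact (measurableSet_le measurable_const measurable_fst.snd).inter
        (measurableSet_le measurable_fst.snd measurable_fst.fst)
    · exact (((measurable_const.mul (measurable_fst.fst.sub measurable_fst.snd)).mul
        (measurable_snd.norm.pow_const 2)).exp).ennreal_ofReal
    · exact measurable_const
  · exact (measurable_snd.norm.pow_const 2).ennreal_ofReal
  · exact hK.comp (measurable_fst.snd.prodMk measurable_snd)



lemma aux_exp (b : ℝ) (hb : 0 < b) (s : ℝ) :
    ∫⁻ t in Set.Ioi s, ENNReal.ofReal (b * Real.exp (-(b * (t - s)))) ≤ 1 := by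
  have hshift : ∫⁻ t in Set.Ioi s, ENNReal.ofReal (b * Real.exp (-(b * (t - s))))
      = ∫⁻ u in Set.Ioi (0:ℝ), ENNReal.ofReal (b * Real.exp (-(b * u))) := by
    rw [← lintegral_indicator measurableSet_Ioi, ← lintegral_indicator measurableSet_Ioi]
    have : ∀ t : ℝ, (Set.Ioi s).indicator (fun t => ENNReal.ofReal (b * Real.exp (-(b * (t - s))))) t
        = (Set.Ioi (0:ℝ)).indicator (fun u => ENNReal.ofReal (b * Real.exp (-(b * u)))) (t - s) := by
      intro t
      by_cases h : s < t
      · rw [Set.indicator_of_mem (show t ∈ Set.Ioi s from h), Set.indicator_of_mem (show t - s ∈ Set.Ioi (0:ℝ) by simpa [sub_pos] using h)]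
      · rw [Set.indicator_of_notMem (show t ∉ Set.Ioi s from h), Set.indicator_of_notMem (show t - s ∉ Set.Ioi (0:ℝ) by simpa [sub_pos] using h)]
    simp_rw [this]
    exact lintegral_sub_right_eq_self _ s
  rw [hshift]
  calc ∫⁻ u in Set.Ioi (0:ℝ), ENNReal.ofReal (b * Real.exp (-(b * u)))
      = ∫⁻ u in Set.Ioi (0:ℝ), ProbabilityTheory.exponentialPDF b u := by
        refine setLIntegral_congr_fun measurableSet_Ioi (fun u hu => ?_)
        rw [ProbabilityTheory.exponentialPDF_of_nonneg (le_of_lt hu)]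
    _ ≤ ∫⁻ u, ProbabilityTheory.exponentialPDF b u := setLIntegral_le_lintegral _ _
    _ = 1 := ProbabilityTheory.lintegral_exponentialPDF_eq_one hb

lemma aux_t (ν : ℝ) (hν : 0 < ν) (s : ℝ) (c : ℝ) (hc : 0 ≤ c) :
    ∫⁻ t in Set.Ici s, ENNReal.ofReal (Real.exp (-ν * (t - s) * c)) * ENNReal.ofReal c
      ≤ (ENNReal.ofReal ν)⁻¹ := by
  rcases hc.eq_or_lt with h | h
  · simp [← h]
  · rw [ENNReal.le_inv_iff_mul_le]
    rw [Measure.restrict_congr_set (Ioi_ae_eq_Ici (a := s)).symm]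
    calc (∫⁻ t in Set.Ioi s, ENNReal.ofReal (Real.exp (-ν * (t - s) * c)) * ENNReal.ofReal c) * ENNReal.ofReal ν
        = ∫⁻ t in Set.Ioi s, ENNReal.ofReal ((ν * c) * Real.exp (-((ν * c) * (t - s)))) := by
          rw [← lintegral_mul_const' (ENNReal.ofReal ν) _ ENNReal.ofReal_ne_top]
          refine lintegral_congr fun t => ?_
          rw [← ENNReal.ofReal_mul (Real.exp_nonneg _), ← ENNReal.ofReal_mul (by positivity)]
          congr 1
          ring_nf
      _ ≤ 1 := aux_exp (ν * c) (by positivity) s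

/-- Bilinear L¹-χ¹ estimate: with
`H(t,ξ) = ∫₀ᵗ e^{−ν(t−s)|ξ|²} |ξ| (F(s,·) ∗ G(s,·))(ξ) ds`,
`‖H‖_{L¹([0,T];χ¹)} ≤ ν⁻¹ ‖F‖_{L²([0,T];χ⁰)} ‖G‖_{L²([0,T];χ⁰)}`. -/
theorem stmt_6 (ν T : ℝ) (hν : 0 < ν) (hT : 0 < T)
    (F G : ℝ → EuclideanSpace ℝ (Fin 3) → ENNReal)
    (hF : Measurable (Function.uncurry F)) (hG : Measurable (Function.uncurry G))
    (H : ℝ → EuclideanSpace ℝ (Fin 3) → ENNReal)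
    (hH : ∀ t ξ, H t ξ =
      ∫⁻ s in Set.Icc (0 : ℝ) t,
        ENNReal.ofReal (Real.exp (-ν * (t - s) * ‖ξ‖ ^ 2)) * ENNReal.ofReal ‖ξ‖ *
          ∫⁻ η, F s η * G s (ξ - η)) :
    ∫⁻ t in Set.Icc (0 : ℝ) T, ∫⁻ ξ, ENNReal.ofReal ‖ξ‖ * H t ξ ≤
      (ENNReal.ofReal ν)⁻¹ *
        ((∫⁻ s in Set.Icc (0 : ℝ) T, (∫⁻ ξ, F s ξ) ^ 2) ^ (1 / 2 : ℝ) *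
          (∫⁻ s in Set.Icc (0 : ℝ) T, (∫⁻ ξ, G s ξ) ^ 2) ^ (1 / 2 : ℝ)) := by
  set I := Set.Icc (0 : ℝ) T with hIdef
  set K : ℝ → E3 → ENNReal := fun s ξ => ∫⁻ η, F s η * G s (ξ - η) with hKdef
  have hKm : Measurable (Function.uncurry K) := by
    apply Measurable.lintegral_prod_right'
      (f := fun q : (ℝ × E3) × E3 => F q.1.1 q.2 * G q.1.1 (q.1.2 - q.2))
    exact (hF.comp (measurable_fst.fst.prodMk measurable_snd)).mul
      (hG.comp (measurable_fst.fst.prodMk (measurable_fst.snd.sub measurable_snd)))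
  have hΦm := phi_meas ν K hKm
  -- Step 1: rewrite the LHS
  have step1 : ∫⁻ t in I, ∫⁻ ξ, ENNReal.ofReal ‖ξ‖ * H t ξ
      = ∫⁻ t in I, ∫⁻ ξ, ∫⁻ s in I, phi ν K t s ξ := by
    refine setLIntegral_congr_fun measurableSet_Icc (fun t ht => ?_)
    refine lintegral_congr fun ξ => ?_
    rw [hH t ξ]
    rw [← lintegral_const_mul' (ENNReal.ofReal ‖ξ‖) _ ENNReal.ofReal_ne_top]
    have hind : ∀ s, phi ν K t s ξ = (Set.Icc 0 t).indicator
        (fun s => ENNReal.ofReal ‖ξ‖ *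
          (ENNReal.ofReal (Real.exp (-ν * (t - s) * ‖ξ‖ ^ 2)) * ENNReal.ofReal ‖ξ‖ * K s ξ)) s := by
      intro s
      by_cases h : s ∈ Set.Icc 0 t
      · rw [Set.indicator_of_mem h, phi, if_pos (Set.mem_Icc.mp h)]
        rw [show (‖ξ‖:ℝ) ^ 2 = ‖ξ‖ * ‖ξ‖ from sq ‖ξ‖, ENNReal.ofReal_mul (norm_nonneg ξ)]
        ring
      · rw [Set.indicator_of_notMem h, phi, if_neg (by simpa [Set.mem_Icc] using h),
          zero_mul, zero_mul]
    symm
    simp_rw [hind]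
    rw [setLIntegral_indicator measurableSet_Icc,
      Set.inter_eq_left.2 (Set.Icc_subset_Icc le_rfl ht.2)]
  rw [step1]
  -- Step 2: reorder the integrals
  have swap1 : ∀ t, ∫⁻ ξ, ∫⁻ s in I, phi ν K t s ξ = ∫⁻ s in I, ∫⁻ ξ, phi ν K t s ξ := fun t =>
    lintegral_lintegral_swap
      ((hΦm.comp (((measurable_const.prodMk measurable_snd)).prodMk measurable_fst)).aemeasurable)
  have swap2 : ∫⁻ t in I, ∫⁻ s in I, ∫⁻ ξ, phi ν K t s ξ
      = ∫⁻ s in I, ∫⁻ t in I, ∫⁻ ξ, phi ν K t s ξ :=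
    lintegral_lintegral_swap (hΦm.lintegral_prod_right'.aemeasurable)
  have swap3 : ∀ s, ∫⁻ t in I, ∫⁻ ξ, phi ν K t s ξ = ∫⁻ ξ, ∫⁻ t in I, phi ν K t s ξ := fun s =>
    lintegral_lintegral_swap
      ((hΦm.comp ((measurable_fst.prodMk measurable_const).prodMk measurable_snd)).aemeasurable)
  simp_rw [swap1]
  rw [swap2]
  simp_rw [swap3]
  -- Step 3: bound the inner t-integral
  have inner_bound : ∀ (s : ℝ) (ξ : E3),
      ∫⁻ t in I, phi ν K t s ξ ≤ (ENNReal.ofReal ν)⁻¹ * K s ξ := by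
    intro s ξ
    have hle : ∀ t, phi ν K t s ξ ≤ (Set.Ici s).indicator
        (fun t => ENNReal.ofReal (Real.exp (-ν * (t - s) * ‖ξ‖ ^ 2)) *
          ENNReal.ofReal (‖ξ‖ ^ 2)) t * K s ξ := by
      intro t
      by_cases h : 0 ≤ s ∧ s ≤ t
      · rw [phi, if_pos h, Set.indicator_of_mem (Set.mem_Ici.mpr h.2)]
      · rw [phi, if_neg h, zero_mul, zero_mul]; exact zero_le
    calc ∫⁻ t in I, phi ν K t s ξ
        ≤ ∫⁻ t in I, (Set.Ici s).indicator
            (fun t => ENNReal.ofReal (Real.exp (-ν * (t - s) * ‖ξ‖ ^ 2)) *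
              ENNReal.ofReal (‖ξ‖ ^ 2)) t * K s ξ := lintegral_mono hle
      _ ≤ ∫⁻ t, (Set.Ici s).indicator
            (fun t => ENNReal.ofReal (Real.exp (-ν * (t - s) * ‖ξ‖ ^ 2)) *
              ENNReal.ofReal (‖ξ‖ ^ 2)) t * K s ξ := setLIntegral_le_lintegral _ _
      _ = (∫⁻ t, (Set.Ici s).indicator
            (fun t => ENNReal.ofReal (Real.exp (-ν * (t - s) * ‖ξ‖ ^ 2)) *
              ENNReal.ofReal (‖ξ‖ ^ 2)) t) * K s ξ :=
          lintegral_mul_const _ (Measurable.indicator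
            (((measurable_const.mul (measurable_id.sub measurable_const)).mul
              measurable_const).exp.ennreal_ofReal.mul measurable_const) measurableSet_Ici)
      _ = (∫⁻ t in Set.Ici s, ENNReal.ofReal (Real.exp (-ν * (t - s) * ‖ξ‖ ^ 2)) *
            ENNReal.ofReal (‖ξ‖ ^ 2)) * K s ξ := by rw [lintegral_indicator measurableSet_Ici]
      _ ≤ (ENNReal.ofReal ν)⁻¹ * K s ξ :=
          mul_le_mul_left (aux_t ν hν s (‖ξ‖ ^ 2) (by positivity)) _
  -- Step 4: assemble
  have hνtop : (ENNReal.ofReal ν)⁻¹ ≠ ⊤ := by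
    simp [ENNReal.inv_ne_top, hν]
  have hfm : Measurable fun s => ∫⁻ ξ, F s ξ := hF.lintegral_prod_right'
  have hgm : Measurable fun s => ∫⁻ ξ, G s ξ := hG.lintegral_prod_right'
  calc ∫⁻ s in I, ∫⁻ ξ, ∫⁻ t in I, phi ν K t s ξ
      ≤ ∫⁻ s in I, ∫⁻ ξ, (ENNReal.ofReal ν)⁻¹ * K s ξ :=
        lintegral_mono fun s => lintegral_mono fun ξ => inner_bound s ξ
    _ = ∫⁻ s in I, (ENNReal.ofReal ν)⁻¹ * ((∫⁻ ξ, F s ξ) * (∫⁻ ξ, G s ξ)) := by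
        refine lintegral_congr fun s => ?_
        rw [lintegral_const_mul' _ _ hνtop, aux_conv (F s) (G s)
          hF.of_uncurry_left hG.of_uncurry_left]
    _ = (ENNReal.ofReal ν)⁻¹ * ∫⁻ s in I, (∫⁻ ξ, F s ξ) * (∫⁻ ξ, G s ξ) :=
        lintegral_const_mul' _ _ hνtop
    _ ≤ (ENNReal.ofReal ν)⁻¹ *
        ((∫⁻ s in I, (∫⁻ ξ, F s ξ) ^ 2) ^ (1 / 2 : ℝ) *
          (∫⁻ s in I, (∫⁻ ξ, G s ξ) ^ 2) ^ (1 / 2 : ℝ)) := by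
        refine mul_le_mul_right ?_ _
        have hconj : Real.HolderConjugate 2 2 := Real.HolderConjugate.two_two
        have := ENNReal.lintegral_mul_le_Lp_mul_Lq (volume.restrict I) hconj
          hfm.aemeasurable hgm.aemeasurable
        simp only [Pi.mul_apply] at this
        simp_rw [show ∀ x : ENNReal, x ^ (2 : ℕ) = x ^ (2 : ℝ) from fun x => by
          rw [← ENNReal.rpow_natCast]; norm_num]
        exact this
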